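/- Let β > 0 and let Φ ∈ ℝ satisfy the Hamiltonian constraint at time zero with φ(0) = 0, namely 3β^2 − 3·Φ·β^3 = Φ^2/2. Then the denominator of the reduced Hubble evolution equation is positive, 2 − 2βΦ + 3β^4 > 0, and the initial value of D₁ = H' + 5H^2 computed from the reduced equation is positive: (−4β^3·Φ − Φ^2 + β^2·Φ^2 − 3β^6)/(2 − 2βΦ + 3β^4) + 5β^2 > 0. -/

import Mathlib

/-- If `Φ` satisfies the Hamiltonian constraint at time zero with `φ(0) = 0` and
`H(0) = β > 0`, namely `3β² − 3Φβ³ = Φ²/2`, then the denominator of the reduced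
Hubble evolution equation is positive, `2 − 2βΦ + 3β⁴ > 0`, and the initial value
of `D₁ = H' + 5H²` computed from the reduced equation is positive. -/
theorem stmt_6 (β Φ : ℝ) (hβ : 0 < β)
    (hc : 3 * β ^ 2 - 3 * Φ * β ^ 3 = Φ ^ 2 / 2) :
    2 - 2 * β * Φ + 3 * β ^ 4 > 0 ∧
    (-4 * β ^ 3 * Φ - Φ ^ 2 + β ^ 2 * Φ ^ 2 - 3 * β ^ 6) /
        (2 - 2 * β * Φ + 3 * β ^ 4) + 5 * β ^ 2 > 0 := by
  have hD : 2 - 2 * β * Φ + 3 * β ^ 4 > 0 := by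
    nlinarith [sq_nonneg Φ, pow_pos hβ 2, pow_pos hβ 6,
      mul_pos (pow_pos hβ 2) (pow_pos hβ 4)]
  refine ⟨hD, ?_⟩
  have hE : (-4 * β ^ 3 * Φ - Φ ^ 2 + β ^ 2 * Φ ^ 2 - 3 * β ^ 6)
      + 5 * β ^ 2 * (2 - 2 * β * Φ + 3 * β ^ 4) > 0 := by
    nlinarith [sq_nonneg Φ, sq_nonneg (β * Φ), sq_nonneg (β * Φ - 2 * β ^ 2),
      pow_pos hβ 2, pow_pos hβ 4, pow_pos hβ 6, sq_nonneg (Φ + 3 * β ^ 3),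
      sq_nonneg (Φ - β), sq_nonneg (Φ * β - 1), mul_pos hβ hβ,
      mul_pos (pow_pos hβ 2) (pow_pos hβ 2)]
  have key : (-4 * β ^ 3 * Φ - Φ ^ 2 + β ^ 2 * Φ ^ 2 - 3 * β ^ 6) /
        (2 - 2 * β * Φ + 3 * β ^ 4) + 5 * β ^ 2
      = ((-4 * β ^ 3 * Φ - Φ ^ 2 + β ^ 2 * Φ ^ 2 - 3 * β ^ 6)
          + 5 * β ^ 2 * (2 - 2 * β * Φ + 3 * β ^ 4)) /
        (2 - 2 * β * Φ + 3 * β ^ 4) := by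
    rw [div_add' _ _ _ hD.ne']
  rw [key]
  exact div_pos hE hD
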